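/- For every integer n ≥ 3 odd, the only zeros of the Bernoulli polynomial Bₙ(x) in the interval [0,1] are 0, 1/2, and 1. -/

import Mathlib

open Set intervalIntegral

/-! Auxiliary lemmas about `bernoulliFun`. -/

private lemma hasDerivAt_bf (n : ℕ) (x : ℝ) :
    HasDerivAt (bernoulliFun (n + 1)) (((n : ℝ) + 1) * bernoulliFun n x) x := by
  simpa using hasDerivAt_bernoulliFun (n + 1) x

private lemma bf_cont (n : ℕ) : Continuous (bernoulliFun n) :=
  (Polynomial.map (algebraMap ℚ ℝ) (Polynomial.bernoulli n)).continuous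

/-- Symmetry: `Bₙ(1 - x) = (-1)ⁿ Bₙ(x)`. -/
private lemma bf_symm : ∀ (n : ℕ) (x : ℝ),
    bernoulliFun n (1 - x) = (-1) ^ n * bernoulliFun n x := by
  intro n
  induction n with
  | zero =>
    intro x
    simp [bernoulliFun]
  | succ n ih =>
    have key : ∀ x : ℝ, bernoulliFun (n + 1) (1 - x)
        - (-1) ^ (n + 1) * bernoulliFun (n + 1) x = 0 := by
      set g : ℝ → ℝ := fun y =>
        bernoulliFun (n + 1) (1 - y) - (-1) ^ (n + 1) * bernoulliFun (n + 1) y with hgdef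
      have hd : ∀ y : ℝ, HasDerivAt g 0 y := by
        intro y
        have h0 : HasDerivAt (fun y : ℝ => 1 - y) (-1) y := by
          simpa using (hasDerivAt_id y).const_sub 1
        have h1 : HasDerivAt (fun y : ℝ => bernoulliFun (n + 1) (1 - y))
            ((((n : ℝ) + 1) * bernoulliFun n (1 - y)) * (-1)) y :=
          (hasDerivAt_bf n (1 - y)).comp y h0
        have h2 : HasDerivAt (fun y : ℝ => (-1) ^ (n + 1) * bernoulliFun (n + 1) y)
            ((-1) ^ (n + 1) * (((n : ℝ) + 1) * bernoulliFun n y)) y :=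
          (hasDerivAt_bf n y).const_mul _
        have h3 := h1.sub h2
        have heq : (((n : ℝ) + 1) * bernoulliFun n (1 - y)) * (-1)
            - (-1) ^ (n + 1) * (((n : ℝ) + 1) * bernoulliFun n y) = 0 := by
          rw [ih y]; ring
        rw [heq] at h3
        exact h3
      have hconst : ∀ x : ℝ, g x = g 0 :=
        fun x => is_const_of_deriv_eq_zero (fun y => (hd y).differentiableAt)
          (fun y => (hd y).deriv) x 0
      have hg0 : g 0 = 0 := by
        simp only [hgdef, sub_zero]
        rw [bernoulliFun_eval_one, bernoulliFun_eval_zero]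
        rcases eq_or_ne (n + 1) 1 with h1 | h1
        · rw [h1]
          norm_num [bernoulli_one]
        · rw [if_neg h1]
          rcases Nat.even_or_odd (n + 1) with he | ho
          · rw [he.neg_one_pow]
            ring
          · have hz : bernoulli (n + 1) = 0 := by
              rw [bernoulli_eq_bernoulli'_of_ne_one h1]
              exact bernoulli'_eq_zero_of_odd ho (by omega)
            rw [hz]
            norm_num
      intro x
      exact (hconst x).trans hg0
    intro x
    have := key x
    linarith

private lemma bf_half_eq_zero {n : ℕ} (hodd : Odd n) : bernoulliFun n (1 / 2) = 0 := by
  have h := bf_symm n (1 / 2)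
  rw [hodd.neg_one_pow] at h
  norm_num at h
  linarith

private lemma bf_zero_eq_zero {n : ℕ} (hodd : Odd n) (hn : 1 < n) : bernoulliFun n 0 = 0 := by
  rw [bernoulliFun_eval_zero, bernoulli_eq_bernoulli'_of_ne_one (by omega),
    bernoulli'_eq_zero_of_odd hodd hn]
  simp

/-- The key analytic step: if `f(0) = f(1/2) = 0` and `f' = c·g` where `g` is strictly
decreasing on `[0,1/2]`, then `f > 0` on `(0,1/2)`. -/
private lemma step (c : ℝ) (hc : 0 < c) (g f : ℝ → ℝ)
    (hgf : ∀ x, HasDerivAt f (c * g x) x)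
    (hgc : Continuous g)
    (hanti : StrictAntiOn g (Icc 0 (1 / 2)))
    (hf0 : f 0 = 0) (hfh : f (1 / 2) = 0) :
    ∀ x ∈ Ioo (0 : ℝ) (1 / 2), 0 < f x := by
  have hdf : Differentiable ℝ f := fun x => (hgf x).differentiableAt
  have hfc : Continuous f := hdf.continuous
  have hgint : IntervalIntegrable g MeasureTheory.volume 0 (1 / 2) :=
    hgc.intervalIntegrable _ _
  have hint : ∫ x in (0 : ℝ)..(1 / 2), g x = 0 := by
    have h1 : ∫ x in (0 : ℝ)..(1 / 2), c * g x = f (1 / 2) - f 0 :=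
      integral_eq_sub_of_hasDerivAt (fun x _ => hgf x)
        ((continuous_const.mul hgc).intervalIntegrable _ _)
    rw [hf0, hfh, sub_zero, intervalIntegral.integral_const_mul] at h1
    rcases mul_eq_zero.mp h1 with h | h
    · linarith
    · exact h
  have hg0 : 0 < g 0 := by
    by_contra hcon
    push_neg at hcon
    have hneg : ∀ x ∈ Ioo (0 : ℝ) (1 / 2), 0 < -g x := by
      intro x hx
      have : g x < g 0 := hanti (by constructor <;> norm_num)
        ⟨le_of_lt hx.1, le_of_lt hx.2⟩ hx.1
      simp only [neg_pos]
      linarith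
    have hpos := intervalIntegral_pos_of_pos_on (hgc.neg.intervalIntegrable 0 (1 / 2))
      hneg (by norm_num)
    simp only [Pi.neg_apply, intervalIntegral.integral_neg, hint] at hpos
    norm_num at hpos
  have hgh : g (1 / 2) < 0 := by
    by_contra hcon
    push_neg at hcon
    have hposon : ∀ x ∈ Ioo (0 : ℝ) (1 / 2), 0 < g x := by
      intro x hx
      have : g (1 / 2) < g x := hanti ⟨le_of_lt hx.1, le_of_lt hx.2⟩
        (by constructor <;> norm_num) hx.2
      linarith
    have hpos := intervalIntegral_pos_of_pos_on hgint hposon (by norm_num)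
    rw [hint] at hpos
    norm_num at hpos
  obtain ⟨cc, hcc, hgcc⟩ : ∃ cc ∈ Ioo (0 : ℝ) (1 / 2), g cc = 0 :=
    intermediate_value_Ioo' (by norm_num : (0 : ℝ) ≤ 1 / 2) hgc.continuousOn ⟨hgh, hg0⟩
  have hmono : StrictMonoOn f (Icc 0 cc) := by
    apply strictMonoOn_of_deriv_pos (convex_Icc _ _) hfc.continuousOn
    intro y hy
    rw [interior_Icc] at hy
    rw [(hgf y).deriv]
    have hlt : g cc < g y := hanti ⟨le_of_lt hy.1, le_trans (le_of_lt hy.2) (le_of_lt hcc.2)⟩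
      ⟨le_of_lt hcc.1, le_of_lt hcc.2⟩ hy.2
    rw [hgcc] at hlt
    positivity
  have hanti' : StrictAntiOn f (Icc cc (1 / 2)) := by
    apply strictAntiOn_of_deriv_neg (convex_Icc _ _) hfc.continuousOn
    intro y hy
    rw [interior_Icc] at hy
    rw [(hgf y).deriv]
    have hlt : g y < g cc := hanti ⟨le_of_lt hcc.1, le_of_lt hcc.2⟩
      ⟨le_trans (le_of_lt hcc.1) (le_of_lt hy.1), le_of_lt hy.2⟩ hy.1
    rw [hgcc] at hlt
    exact mul_neg_of_pos_of_neg hc hlt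
  intro x hx
  rcases le_or_gt x cc with hxc | hxc
  · have h := hmono ⟨le_refl 0, le_of_lt hcc.1⟩ ⟨le_of_lt hx.1, hxc⟩ hx.1
    rw [hf0] at h
    exact h
  · have h := hanti' ⟨le_of_lt hxc, le_of_lt hx.2⟩
      ⟨le_of_lt hcc.2, le_refl _⟩ hx.2
    rw [hfh] at h
    exact h

private lemma anti_of_neg (c : ℝ) (hc : 0 < c) (h g : ℝ → ℝ)
    (hd : ∀ x, HasDerivAt g (c * h x) x)
    (hneg : ∀ x ∈ Ioo (0 : ℝ) (1 / 2), h x < 0) :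
    StrictAntiOn g (Icc 0 (1 / 2)) := by
  apply strictAntiOn_of_deriv_neg (convex_Icc _ _)
    (fun x _ => (hd x).differentiableAt.continuousAt.continuousWithinAt)
  intro y hy
  rw [interior_Icc] at hy
  rw [(hd y).deriv]
  exact mul_neg_of_pos_of_neg hc (hneg y hy)

/-- Odd Bernoulli polynomials have constant sign on `(0, 1/2)`. -/
private lemma sign_odd : ∀ k : ℕ,
    (∀ x ∈ Ioo (0 : ℝ) (1 / 2), bernoulliFun (2 * k + 1) x < 0) ∨
    (∀ x ∈ Ioo (0 : ℝ) (1 / 2), 0 < bernoulliFun (2 * k + 1) x) := by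
  intro k
  induction k with
  | zero =>
    left
    intro x hx
    have h1 : bernoulliFun 1 x = x - 1 / 2 := by
      simp [bernoulliFun, Polynomial.bernoulli, Finset.sum_range_succ, bernoulli_one]
      ring
    rw [h1]
    linarith [hx.2]
  | succ k ih =>
    rw [show 2 * (k + 1) + 1 = 2 * k + 3 from by ring]
    have hz0 : bernoulliFun (2 * k + 3) 0 = 0 :=
      bf_zero_eq_zero ⟨k + 1, by ring⟩ (by omega)
    have hzh : bernoulliFun (2 * k + 3) (1 / 2) = 0 :=
      bf_half_eq_zero ⟨k + 1, by ring⟩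
    -- derivative facts
    have hd2 : ∀ x : ℝ, HasDerivAt (bernoulliFun (2 * k + 2))
        ((2 * (k : ℝ) + 2) * bernoulliFun (2 * k + 1) x) x := by
      intro x
      have h := hasDerivAt_bf (2 * k + 1) x
      rw [show 2 * k + 1 + 1 = 2 * k + 2 from by ring] at h
      convert h using 1
      push_cast
      ring
    have hd3 : ∀ x : ℝ, HasDerivAt (bernoulliFun (2 * k + 3))
        ((2 * (k : ℝ) + 3) * bernoulliFun (2 * k + 2) x) x := by
      intro x
      have h := hasDerivAt_bf (2 * k + 2) x
      rw [show 2 * k + 2 + 1 = 2 * k + 3 from by ring] at h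
      convert h using 1
      push_cast
      ring
    have hc2 : (0 : ℝ) < 2 * (k : ℝ) + 2 := by positivity
    have hc3 : (0 : ℝ) < 2 * (k : ℝ) + 3 := by positivity
    rcases ih with h | h
    · -- B_{2k+1} < 0 on (0,1/2) : B_{2k+2} strictly decreasing, B_{2k+3} > 0
      right
      have hanti : StrictAntiOn (bernoulliFun (2 * k + 2)) (Icc 0 (1 / 2)) :=
        anti_of_neg _ hc2 _ _ hd2 h
      exact step _ hc3 _ _ hd3 (bf_cont _) hanti hz0 hzh
    · -- B_{2k+1} > 0 : apply the previous argument to the negations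
      left
      have hd2' : ∀ x : ℝ, HasDerivAt (fun y => -bernoulliFun (2 * k + 2) y)
          ((2 * (k : ℝ) + 2) * (-bernoulliFun (2 * k + 1) x)) x := by
        intro x
        have := (hd2 x).neg
        convert this using 1
        · rfl
        · rfl
        · funext y
          rfl
        · ring
      have hd3' : ∀ x : ℝ, HasDerivAt (fun y => -bernoulliFun (2 * k + 3) y)
          ((2 * (k : ℝ) + 3) * (-bernoulliFun (2 * k + 2) x)) x := by
        intro x
        have := (hd3 x).neg
        convert this using 1
        · rfl
        · rfl
        · funext y
          rfl
        · ring
      have hanti : StrictAntiOn (fun y => -bernoulliFun (2 * k + 2) y) (Icc 0 (1 / 2)) := by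
        apply anti_of_neg _ hc2 (fun y => -bernoulliFun (2 * k + 1) y) _ hd2'
        intro x hx
        have := h x hx
        simpa using this
      have hpos := step _ hc3 _ _ hd3' (bf_cont (2 * k + 2)).neg hanti
        (by simpa using hz0) (by simpa using hzh)
      intro x hx
      have := hpos x hx
      simpa using this

open Set

/-- For odd `n ≥ 3`, the only zeros of the Bernoulli polynomial `Bₙ` in `[0,1]`
are `0`, `1/2` and `1`. -/
theorem stmt_4 (n : ℕ) (hn : 3 ≤ n) (hodd : Odd n) :
    ∀ x ∈ Icc (0:ℝ) 1,
      (Polynomial.aeval x (Polynomial.bernoulli n) = 0 ↔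
        x = 0 ∨ x = 1/2 ∨ x = 1) := by
  have hb : ∀ x : ℝ, (Polynomial.aeval x (Polynomial.bernoulli n) : ℝ) = bernoulliFun n x := by
    intro x
    rw [Polynomial.aeval_def, Polynomial.eval₂_eq_eval_map]
    rfl
  intro x hx
  rw [hb]
  obtain ⟨k, rfl⟩ := hodd
  have hsign := sign_odd k
  constructor
  · intro hzero
    by_contra hcon
    push_neg at hcon
    obtain ⟨h0, hhalf, h1⟩ := hcon
    rcases lt_trichotomy x (1 / 2) with hlt | heq | hgt
    · have hxm : x ∈ Ioo (0 : ℝ) (1 / 2) := ⟨lt_of_le_of_ne hx.1 (Ne.symm h0), hlt⟩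
      rcases hsign with h | h
      · exact absurd hzero (h x hxm).ne
      · exact absurd hzero (h x hxm).ne'
    · exact hhalf heq
    · have hx1 : x < 1 := lt_of_le_of_ne hx.2 h1
      have hxm : 1 - x ∈ Ioo (0 : ℝ) (1 / 2) := ⟨by linarith, by linarith⟩
      have hz : bernoulliFun (2 * k + 1) (1 - x) = 0 := by
        rw [bf_symm, hzero, mul_zero]
      rcases hsign with h | h
      · exact absurd hz (h _ hxm).ne
      · exact absurd hz (h _ hxm).ne'
  · rintro (rfl | rfl | rfl)
    · exact bf_zero_eq_zero ⟨k, rfl⟩ (by omega)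
    · exact bf_half_eq_zero ⟨k, rfl⟩
    · rw [bernoulliFun_endpoints_eq_of_ne_one (by omega)]
      exact bf_zero_eq_zero ⟨k, rfl⟩ (by omega)
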